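/- There are no integers p, q such that p² + q² and p² - q² are both positive perfect squares. -/

import Mathlib

private lemma pos_eq_sq {a c : ℤ} (ha : 0 < a) (h : a = c ^ 2 ∨ a = -c ^ 2) :
    a = |c| ^ 2 := by
  rcases h with h | h
  · rw [sq_abs]; exact h
  · exfalso; nlinarith [sq_nonneg c]

private lemma odd_coprime_two {a : ℤ} (h : Odd a) : IsCoprime a 2 := by
  obtain ⟨k, hk⟩ := h
  exact ⟨1, -k, by rw [hk]; ring⟩

private lemma descent_step {x y a b : ℤ} (hx : 0 < x) (hy : 0 < y)
    (hab : Int.gcd a b = 1) (habp : 0 < a * b) (hlt : b ^ 2 < a ^ 2)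
    (ha : 0 ≤ a)
    (hxab : x = a ^ 2 + b ^ 2) (hY : y ^ 2 = 4 * (a * b) * ((a - b) * (a + b)))
    (hparity : a % 2 = 0 ∧ b % 2 = 1 ∨ a % 2 = 1 ∧ b % 2 = 0) :
    ∃ e f w : ℤ, 0 < e ∧ 0 < f ∧ 0 < w ∧ Int.gcd e f = 1 ∧
      e ^ 4 = f ^ 4 + w ^ 2 ∧ e < x := by
  have ha0 : 0 < a := by
    rcases ha.lt_or_eq with h | h
    · exact h
    · rw [← h] at habp; simp at habp
  have hb0 : 0 < b := by nlinarith
  have hba : b < a := by nlinarith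
  have hco : IsCoprime a b := Int.isCoprime_iff_gcd_eq_one.mpr hab
  -- y is even
  have h2y : (2 : ℤ) ∣ y := by
    have h2 : (2 : ℤ) ∣ y ^ 2 := ⟨2 * (a * b) * ((a - b) * (a + b)), by linarith [hY]⟩
    exact Int.Prime.dvd_pow' Nat.prime_two h2
  obtain ⟨w, hw⟩ := h2y
  have hw0 : 0 < w := by nlinarith
  have hw2 : w ^ 2 = (a * b) * ((a - b) * (a + b)) := by nlinarith [hY, hw]
  -- parity of a-b, a+b
  have hodd_sub : Odd (a - b) := by
    rw [Int.odd_iff]; rcases hparity with ⟨h1, h2⟩ | ⟨h1, h2⟩ <;> omega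
  -- coprimality facts
  have c_a_sub : IsCoprime a (a - b) := by
    have h3 := hco.neg_right.add_mul_left_right 1
    have : -b + a * 1 = a - b := by ring
    rwa [this] at h3
  have c_a_add : IsCoprime a (a + b) := by
    have h3 := hco.add_mul_left_right 1
    have : b + a * 1 = a + b := by ring
    rwa [this] at h3
  have c_b_sub : IsCoprime b (a - b) := by
    have h3 := hco.symm.add_mul_left_right (-1)
    have : a + b * (-1) = a - b := by ring
    rwa [this] at h3
  have c_b_add : IsCoprime b (a + b) := by
    have h3 := hco.symm.add_mul_left_right 1
    have : a + b * 1 = a + b := by ring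
    rwa [this] at h3
  have c_sub_add : IsCoprime (a - b) (a + b) := by
    have h2 : IsCoprime (a - b) (2 * b) :=
      (odd_coprime_two hodd_sub).mul_right c_b_sub.symm
    have h3 := h2.add_mul_left_right 1
    have : 2 * b + (a - b) * 1 = a + b := by ring
    rwa [this] at h3
  have cop_main : IsCoprime (a * b) ((a - b) * (a + b)) :=
    (c_a_sub.mul_right c_a_add).mul_left (c_b_sub.mul_right c_b_add)
  -- extract squares
  obtain ⟨c, hc⟩ := Int.sq_of_isCoprime cop_main hw2.symm
  have hc' : a * b = |c| ^ 2 := pos_eq_sq habp hc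
  obtain ⟨d, hd⟩ := Int.sq_of_isCoprime cop_main.symm
    (by linarith [hw2, mul_comm (a * b) ((a - b) * (a + b))] :
      (a - b) * (a + b) * (a * b) = w ^ 2)
  have hsub0 : 0 < a - b := by linarith
  have hadd0 : 0 < a + b := by linarith
  have hd' : (a - b) * (a + b) = |d| ^ 2 := pos_eq_sq (mul_pos hsub0 hadd0) hd
  obtain ⟨e0, he0⟩ := Int.sq_of_isCoprime hco hc'
  have he : a = |e0| ^ 2 := pos_eq_sq ha0 he0
  obtain ⟨f0, hf0⟩ := Int.sq_of_isCoprime hco.symm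
    (by linarith [hc', mul_comm a b] : b * a = |c| ^ 2)
  have hf : b = |f0| ^ 2 := pos_eq_sq hb0 hf0
  obtain ⟨g0, hg0⟩ := Int.sq_of_isCoprime c_sub_add hd'
  have hg : a - b = |g0| ^ 2 := pos_eq_sq hsub0 hg0
  obtain ⟨h0, hh0⟩ := Int.sq_of_isCoprime c_sub_add.symm
    (by linarith [hd', mul_comm (a - b) (a + b)] : (a + b) * (a - b) = |d| ^ 2)
  have hh : a + b = |h0| ^ 2 := pos_eq_sq hadd0 hh0
  have hepos : 0 < |e0| := by
    rcases (abs_nonneg e0).lt_or_eq with h | h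
    · exact h
    · exfalso; rw [← h] at he; simp at he; linarith
  have hfpos : 0 < |f0| := by
    rcases (abs_nonneg f0).lt_or_eq with h | h
    · exact h
    · exfalso; rw [← h] at hf; simp at hf; linarith
  have hgpos : 0 < |g0| := by
    rcases (abs_nonneg g0).lt_or_eq with h | h
    · exact h
    · exfalso; rw [← h] at hg; simp at hg; linarith
  have hhpos : 0 < |h0| := by
    rcases (abs_nonneg h0).lt_or_eq with h | h
    · exact h
    · exfalso; rw [← h] at hh; simp at hh; linarith
  refine ⟨|e0|, |f0|, |g0| * |h0|, hepos, hfpos, mul_pos hgpos hhpos, ?_, ?_, ?_⟩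
  · rw [← Int.isCoprime_iff_gcd_eq_one]
    have hEF : IsCoprime (|e0| ^ 2) (|f0| ^ 2) := by rw [← he, ← hf]; exact hco
    exact ((IsCoprime.pow_left_iff two_pos).trans (IsCoprime.pow_right_iff two_pos)).mp hEF
  · linear_combination -(|e0| ^ 2 + a) * he + (b + |f0| ^ 2) * hf + (a + b) * hg + |g0| ^ 2 * hh
  · have h1 : (1 : ℤ) ≤ |e0| := Int.one_le_abs (by intro h; rw [h] at he; simp at he; omega)
    have h2 : |e0| ≤ |e0| ^ 2 := le_self_pow₀ h1 (by norm_num)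
    have h3 : a ≤ a ^ 2 := le_self_pow₀ (by omega) (by norm_num)
    have h4 : 0 < b ^ 2 := pow_pos hb0 2
    linarith

private lemma no_quartic_diff : ∀ X : ℕ, ∀ x y z : ℤ, x.natAbs = X → 0 < x → 0 < y → 0 < z →
    Int.gcd x y = 1 → x ^ 4 = y ^ 4 + z ^ 2 → False := by
  intro X
  induction X using Nat.strong_induction_on with
  | _ X ih =>
  intro x y z hX hx hy hz hgcd heq
  have hco : IsCoprime x y := Int.isCoprime_iff_gcd_eq_one.mpr hgcd
  have hzy : IsCoprime z y := by
    have h1 : IsCoprime (x ^ 4) (y ^ 4) := hco.pow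
    have h2 : IsCoprime (z ^ 2) (y ^ 4) := by
      have hz2 : z ^ 2 = x ^ 4 + (-1) * y ^ 4 := by linarith
      rw [hz2]
      exact h1.add_mul_right_left (-1)
    exact ((IsCoprime.pow_left_iff two_pos).trans
      (IsCoprime.pow_right_iff (by norm_num : (0:ℕ) < 4))).mp h2
  rcases Int.even_or_odd y with hye | hyo
  · -- y even : use triple (z, y^2, x^2)
    have hzodd : Odd z := by
      rcases Int.even_or_odd z with hze | hzo
      · exfalso
        have hx4 : Even (x ^ 4) := by
          rw [heq]
          exact (Int.even_pow.mpr ⟨hye, by norm_num⟩).add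
            (Int.even_pow.mpr ⟨hze, by norm_num⟩)
        have hxe : Even x := (Int.even_pow.mp hx4).1
        have h2 : IsUnit (2 : ℤ) :=
          hco.isUnit_of_dvd' hxe.two_dvd hye.two_dvd
        rw [Int.isUnit_iff] at h2
        omega
      · exact hzo
    have ht : PythagoreanTriple z (y ^ 2) (x ^ 2) := by
      delta PythagoreanTriple
      linear_combination -heq
    have hgzy : Int.gcd z (y ^ 2) = 1 :=
      Int.isCoprime_iff_gcd_eq_one.mp (hzy.pow_right)
    obtain ⟨m, n, hzmn, hy2mn, hx2mn, hmn, hmnpar, hm0⟩ :=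
      PythagoreanTriple.coprime_classification' ht hgzy (Int.odd_iff.mp hzodd)
        (pow_pos hx 2)
    have hmnpos : 0 < m * n := by nlinarith [pow_pos hy 2]
    have hmpos : 0 < m := by
      rcases hm0.lt_or_eq with h | h
      · exact h
      · rw [← h] at hmnpos; simp at hmnpos
    have hnpos : 0 < n := by
      rcases lt_trichotomy n 0 with h | h | h
      · exfalso; nlinarith
      · rw [h] at hmnpos; simp at hmnpos
      · exact h
    rcases hmnpar with ⟨hm2, hn2⟩ | ⟨hm2, hn2⟩
    · -- m even, n odd: triple (n, m, x)
      have ht2 : PythagoreanTriple n m x := by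
        delta PythagoreanTriple
        linear_combination -hx2mn
      obtain ⟨a, b, hna, hma, hxa, hab, habpar, ha0⟩ :=
        PythagoreanTriple.coprime_classification' ht2
          (by rw [Int.gcd_comm]; exact hmn) hn2 hx
      have habp : 0 < a * b := by
        have h5 := hmpos; rw [hma] at h5; linarith
      have hlt : b ^ 2 < a ^ 2 := by
        have h5 := hnpos; rw [hna] at h5; linarith
      obtain ⟨e, f, w, he, hf, hw, hef, heq', helt⟩ :=
        descent_step hx hy hab habp hlt ha0 hxa
          (by rw [hy2mn, hma, hna]; ring) habpar
      exact ih e.natAbs (by rw [← hX]; exact Int.natAbs_lt_natAbs_of_nonneg_of_lt he.le helt)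
        e f w rfl he hf hw hef heq'
    · -- m odd, n even: triple (m, n, x)
      have ht2 : PythagoreanTriple m n x := by
        delta PythagoreanTriple
        linear_combination -hx2mn
      obtain ⟨a, b, hma, hna, hxa, hab, habpar, ha0⟩ :=
        PythagoreanTriple.coprime_classification' ht2 hmn hm2 hx
      have habp : 0 < a * b := by
        have h5 := hnpos; rw [hna] at h5; linarith
      have hlt : b ^ 2 < a ^ 2 := by
        have h5 := hmpos; rw [hma] at h5; linarith
      obtain ⟨e, f, w, he, hf, hw, hef, heq', helt⟩ :=
        descent_step hx hy hab habp hlt ha0 hxa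
          (by rw [hy2mn, hma, hna]; ring) habpar
      exact ih e.natAbs (by rw [← hX]; exact Int.natAbs_lt_natAbs_of_nonneg_of_lt he.le helt)
        e f w rfl he hf hw hef heq'
  · -- y odd : use triple (y^2, z, x^2)
    have ht : PythagoreanTriple (y ^ 2) z (x ^ 2) := by
      delta PythagoreanTriple
      linear_combination -heq
    have hgy2z : Int.gcd (y ^ 2) z = 1 :=
      Int.isCoprime_iff_gcd_eq_one.mp (hzy.symm.pow_left)
    have hy2odd : (y ^ 2) % 2 = 1 := Int.odd_iff.mp (hyo.pow)
    obtain ⟨m, n, hy2mn, hzmn, hx2mn, hmn, hmnpar, hm0⟩ :=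
      PythagoreanTriple.coprime_classification' ht hgy2z hy2odd (pow_pos hx 2)
    have hn0 : n ≠ 0 := by
      intro h
      rw [h] at hzmn
      simp at hzmn
      omega
    have hmpos : 0 < m := by
      rcases hm0.lt_or_eq with h | h
      · exact h
      · exfalso
        rw [← h] at hy2mn
        nlinarith [pow_pos hy 2, sq_nonneg n]
    have hmx : m < x := by
      nlinarith [sq_pos_of_ne_zero hn0]
    have heq2 : m ^ 4 = |n| ^ 4 + (x * y) ^ 2 := by
      have habs : |n| ^ 4 = n ^ 4 := by
        rcases abs_choice n with h | h <;> rw [h] <;> ring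
      rw [habs, mul_pow, hx2mn, hy2mn]; ring
    have hgmn : Int.gcd m |n| = 1 := by
      rwa [Int.gcd, Int.natAbs_abs, ← Int.gcd]
    exact ih m.natAbs (by rw [← hX]; exact Int.natAbs_lt_natAbs_of_nonneg_of_lt hm0 hmx)
      m |n| (x * y) rfl hmpos (abs_pos.mpr hn0) (mul_pos hx hy) hgmn heq2

private lemma no_sol {x y z : ℤ} (hx : 0 < x) (hy : 0 < y) (hz : 0 < z)
    (h : x ^ 4 = y ^ 4 + z ^ 2) : False := by
  set g : ℤ := (Int.gcd x y : ℤ) with hg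
  have hg0 : 0 < g := by
    rw [hg]
    exact_mod_cast Int.gcd_pos_of_ne_zero_left y hx.ne'
  have hdx : g ∣ x := Int.gcd_dvd_left x y
  have hdy : g ∣ y := Int.gcd_dvd_right x y
  obtain ⟨a, ha⟩ := hdx
  obtain ⟨b, hb⟩ := hdy
  have hgcd : Int.gcd a b = 1 := by
    have h1 : Int.gcd (x / g) (y / g) = 1 := by
      apply Int.gcd_div_gcd_div_gcd
      have := Int.gcd_pos_of_ne_zero_left y hx.ne'
      exact this
    have hxa : x / g = a := by rw [ha]; exact Int.mul_ediv_cancel_left a hg0.ne'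
    have hyb : y / g = b := by rw [hb]; exact Int.mul_ediv_cancel_left b hg0.ne'
    rwa [hxa, hyb] at h1
  have ha0 : 0 < a := by nlinarith
  have hb0 : 0 < b := by nlinarith
  have hdvd : (g ^ 2) ^ 2 ∣ z ^ 2 := by
    refine ⟨a ^ 4 - b ^ 4, ?_⟩
    have : z ^ 2 = x ^ 4 - y ^ 4 := by linarith
    rw [this, ha, hb]; ring
  have hdz : g ^ 2 ∣ z := (Int.pow_dvd_pow_iff two_ne_zero).mp hdvd
  obtain ⟨c, hc⟩ := hdz
  have hc0 : 0 < c := by nlinarith [pow_pos hg0 2]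
  have heq : a ^ 4 = b ^ 4 + c ^ 2 := by
    have h4 : g ^ 4 * a ^ 4 = g ^ 4 * b ^ 4 + g ^ 4 * c ^ 2 := by
      have hxx : x ^ 4 = g ^ 4 * a ^ 4 := by rw [ha]; ring
      have hyy : y ^ 4 = g ^ 4 * b ^ 4 := by rw [hb]; ring
      have hzz : z ^ 2 = g ^ 4 * c ^ 2 := by rw [hc]; ring
      rw [← hxx, ← hyy, ← hzz]; exact h
    have hg4 : (0:ℤ) < g ^ 4 := pow_pos hg0 4
    nlinarith [h4]
  exact no_quartic_diff a.natAbs a b c rfl ha0 hb0 hc0 hgcd heq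

theorem stmt_17 (p q : ℤ) (hq : 0 < q) (hpq : q < p) :
    ¬ (IsSquare (p ^ 2 + q ^ 2) ∧ IsSquare (p ^ 2 - q ^ 2)) := by
  rintro ⟨⟨r, hr⟩, ⟨s, hs⟩⟩
  have hp : 0 < p := hq.trans hpq
  have hkey : p ^ 4 = q ^ 4 + (r * s) ^ 2 := by
    have : (r * s) ^ 2 = (p ^ 2 + q ^ 2) * (p ^ 2 - q ^ 2) := by
      rw [hr, hs]; ring
    rw [this]; ring
  have hrs : r * s ≠ 0 := by
    intro h
    rw [h] at hkey
    simp at hkey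
    have : q ^ 4 < p ^ 4 := pow_lt_pow_left₀ hpq hq.le (by norm_num)
    linarith
  have habs : p ^ 4 = q ^ 4 + |r * s| ^ 2 := by rw [sq_abs]; exact hkey
  exact no_sol hp hq (abs_pos.mpr hrs) habs
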